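/- Let c₁ > 0, q > 1, b₀ ≥ 0, and let g : [0,∞) → [0,∞) be continuous and nondecreasing with g(v) > 0 for v > 0, satisfying g(w) ≤ c₁·(w/v)^(q−1)·g(v) for all w ≥ v > 0 with v ≥ b₀. Define 𝒢(w) := ∫₀^w g(v) dv and ψ(w) := 𝒢(w)/w for w > 0. Then g(w) ≤ (c₁·q/(1 − 2^(−q)))·ψ(w) for all w ≥ 2(1 + b₀), and consequently ψ′(w) ≤ (c₁·q/(1 − 2^(−q)))·ψ(w)/w for all w ≥ 2(1 + b₀). -/

import Mathlib

open intervalIntegral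

/-- Under the growth condition (g₁), with `𝒢(w) = ∫₀^w g(v) dv` and `ψ(w) = 𝒢(w)/w`,
one has `g(w) ≤ (c₁·q/(1 − 2^(−q)))·ψ(w)` for all `w ≥ 2(1+b₀)`, and consequently
`ψ′(w) ≤ (c₁·q/(1 − 2^(−q)))·ψ(w)/w` for all `w ≥ 2(1+b₀)`. -/
theorem g_le_psi_and_psi_derivative_upper_bound
    (c₁ q b₀ : ℝ) (hc₁ : 0 < c₁) (hq : 1 < q) (hb₀ : 0 ≤ b₀)
    (g : ℝ → ℝ)
    (hg_cont : ContinuousOn g (Set.Ici 0))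
    (hg_nonneg : ∀ v, 0 ≤ v → 0 ≤ g v)
    (hg_mono : MonotoneOn g (Set.Ici 0))
    (hg_pos : ∀ v, 0 < v → 0 < g v)
    (hg1 : ∀ v w : ℝ, 0 < v → b₀ ≤ v → v ≤ w → g w ≤ c₁ * (w / v) ^ (q - 1) * g v) :
    ∀ w : ℝ, 2 * (1 + b₀) ≤ w →
      g w ≤ (c₁ * q / (1 - 2 ^ (-q))) * ((∫ v in (0:ℝ)..w, g v) / w) ∧
      deriv (fun w : ℝ => (∫ v in (0:ℝ)..w, g v) / w) w ≤
        (c₁ * q / (1 - 2 ^ (-q))) * ((∫ v in (0:ℝ)..w, g v) / w) / w := by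
  intro w hw
  have hq0 : (0:ℝ) < q := lt_trans one_pos hq
  have hq1 : (0:ℝ) < q - 1 := by linarith
  have hw2 : (2:ℝ) ≤ w := by linarith
  have hw0 : (0:ℝ) < w := by linarith
  have hwhalf : (0:ℝ) < w / 2 := by linarith
  have hb₀w : b₀ ≤ w / 2 := by linarith
  have hA : (0:ℝ) < 1 - 2 ^ (-q) := by
    have h2 : (2:ℝ) ^ (-q) < 1 :=
      Real.rpow_lt_one_of_one_lt_of_neg one_lt_two (by linarith)
    linarith
  set K : ℝ := c₁ * q / (1 - 2 ^ (-q)) with hK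
  set F : ℝ := ∫ v in (0:ℝ)..w, g v with hF
  -- integrability pieces
  have hint1 : IntervalIntegrable g MeasureTheory.volume 0 (w/2) :=
    (hg_cont.mono (by
      intro x hx
      exact hx.1)).intervalIntegrable_of_Icc (le_of_lt hwhalf)
  have hint2 : IntervalIntegrable g MeasureTheory.volume (w/2) w :=
    (hg_cont.mono (by
      intro x hx
      exact le_trans (le_of_lt hwhalf) hx.1)).intervalIntegrable_of_Icc (by linarith)
  have hintF : IntervalIntegrable g MeasureTheory.volume 0 w :=
    hint1.trans hint2
  -- lower bound integrand
  have hφcont : Continuous fun v : ℝ => (g w / c₁) * (v / w) ^ (q - 1) := by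
    apply continuous_const.mul
    exact (continuous_id.div_const w).rpow_const (fun x => Or.inr (le_of_lt hq1))
  -- pointwise bound on [w/2, w]
  have hpt : ∀ v ∈ Set.Icc (w/2) w, (g w / c₁) * (v / w) ^ (q - 1) ≤ g v := by
    intro v hv
    have hv0 : 0 < v := lt_of_lt_of_le hwhalf hv.1
    have hb₀v : b₀ ≤ v := le_trans hb₀w hv.1
    have h1 := hg1 v w hv0 hb₀v hv.2
    have hwv : (0:ℝ) < (w / v) ^ (q - 1) :=
      Real.rpow_pos_of_pos (div_pos hw0 hv0) _
    have hprod : (w / v) ^ (q - 1) * (v / w) ^ (q - 1) = 1 := by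
      rw [← Real.mul_rpow (le_of_lt (div_pos hw0 hv0)) (le_of_lt (div_pos hv0 hw0))]
      rw [div_mul_div_comm, mul_comm w v, div_self (by positivity), Real.one_rpow]
    have hvw : (0:ℝ) < (v / w) ^ (q - 1) :=
      Real.rpow_pos_of_pos (div_pos hv0 hw0) _
    -- from g w ≤ c₁ * (w/v)^(q-1) * g v
    rw [div_mul_eq_mul_div, div_le_iff₀ hc₁]
    calc g w * (v / w) ^ (q - 1)
        ≤ (c₁ * (w / v) ^ (q - 1) * g v) * (v / w) ^ (q - 1) := by
          exact mul_le_mul_of_nonneg_right h1 (le_of_lt hvw)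
      _ = g v * c₁ * ((w / v) ^ (q - 1) * (v / w) ^ (q - 1)) := by ring
      _ = g v * c₁ := by rw [hprod, mul_one]
  -- integral of lower bound
  have hcalc : (∫ v in (w/2)..w, (g w / c₁) * (v / w) ^ (q - 1))
      = (g w / c₁) * (w * (1 - 2 ^ (-q)) / q) := by
    rw [intervalIntegral.integral_const_mul]
    have hcong : (∫ v in (w/2)..w, (v / w) ^ (q - 1))
        = ∫ v in (w/2)..w, v ^ (q - 1) / w ^ (q - 1) := by
      apply intervalIntegral.integral_congr
      intro v hv
      rw [Set.uIcc_of_le (by linarith)] at hv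
      exact Real.div_rpow (le_trans (le_of_lt hwhalf) hv.1) (le_of_lt hw0) (q-1)
    rw [hcong, intervalIntegral.integral_div, integral_rpow (Or.inl (by linarith))]
    have h1 : q - 1 + 1 = q := by ring
    rw [h1]
    have hhalf : (w / 2) ^ q = w ^ q * 2 ^ (-q) := by
      rw [Real.div_rpow (le_of_lt hw0) (by norm_num), Real.rpow_neg (by norm_num)]
      ring
    have hwq : w ^ q = w ^ (q - 1) * w := by
      rw [← Real.rpow_add_one (ne_of_gt hw0) (q-1), h1]
    rw [hhalf]
    field_simp
    rw [hwq]
    ring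
  -- integral comparison
  have hmono : (g w / c₁) * (w * (1 - 2 ^ (-q)) / q) ≤ ∫ v in (w/2)..w, g v := by
    rw [← hcalc]
    apply intervalIntegral.integral_mono_on (by linarith)
      (hφcont.intervalIntegrable _ _) hint2 hpt
  -- F splits
  have hsplit : F = (∫ v in (0:ℝ)..(w/2), g v) + ∫ v in (w/2)..w, g v :=
    (intervalIntegral.integral_add_adjacent_intervals hint1 hint2).symm
  have hnn1 : 0 ≤ ∫ v in (0:ℝ)..(w/2), g v := by
    apply intervalIntegral.integral_nonneg (le_of_lt hwhalf)
    intro u hu; exact hg_nonneg u hu.1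
  have hFlb : (g w / c₁) * (w * (1 - 2 ^ (-q)) / q) ≤ F := by
    rw [hsplit]; linarith
  have hgw0 : 0 ≤ g w := hg_nonneg w (le_of_lt hw0)
  -- main inequality
  have hmain : g w ≤ K * (F / w) := by
    rw [hK]
    rw [div_mul_eq_mul_div, div_le_iff₀ hc₁] at hFlb
    rw [div_mul_eq_mul_div, le_div_iff₀ hA, ← mul_div_assoc, le_div_iff₀ hw0]
    calc g w * (1 - 2 ^ (-q)) * w
        = (g w * (w * (1 - 2 ^ (-q)) / q)) * q := by field_simp
      _ ≤ (F * c₁) * q := by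
          exact mul_le_mul_of_nonneg_right hFlb (le_of_lt hq0)
      _ = c₁ * q * F := by ring
  refine ⟨hmain, ?_⟩
  -- derivative part
  have hFnn : 0 ≤ F := by
    apply intervalIntegral.integral_nonneg (le_of_lt hw0)
    intro u hu; exact hg_nonneg u hu.1
  have hmeas : StronglyMeasurableAtFilter g (nhds w) MeasureTheory.volume := by
    apply AEStronglyMeasurable.stronglyMeasurableAtFilter_of_mem
      (s := Set.Ioi (0:ℝ))
    · exact ((hg_cont.mono (Set.Ioi_subset_Ici le_rfl)).aestronglyMeasurable
        measurableSet_Ioi)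
    · exact Ioi_mem_nhds hw0
  have hcw : ContinuousAt g w :=
    hg_cont.continuousAt (Ici_mem_nhds hw0)
  have hFderiv : HasDerivAt (fun u : ℝ => ∫ v in (0:ℝ)..u, g v) (g w) w :=
    intervalIntegral.integral_hasDerivAt_right hintF hmeas hcw
  have hψ : HasDerivAt (fun u : ℝ => (∫ v in (0:ℝ)..u, g v) / u)
      ((g w * w - F * 1) / w ^ 2) w :=
    hFderiv.div (hasDerivAt_id w) (ne_of_gt hw0)
  rw [hψ.deriv]
  have h1 : (g w * w - F * 1) / w ^ 2 ≤ g w / w := by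
    rw [div_le_div_iff₀ (by positivity) hw0]
    nlinarith
  have h2 : g w / w ≤ K * (F / w) / w := by
    gcongr
  exact h1.trans h2
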